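/- For a noncrossing partition π of {1,...,p} viewed as a permutation and the full cycle γ ∈ S_p, for every integer l one has |1| + |π^l γ| = |πγ⁻¹| + |π^{l+1}|, where |1| = p is the number of cycles of the identity and |σ| denotes the number of cycles of σ. -/

import Mathlib

/-- The number of cycles of a permutation, counting fixed points as cycles. -/
def cycleCount {p : ℕ} (σ : Equiv.Perm (Fin p)) : ℕ :=
  σ.cycleType.card + (Finset.univ.filter fun x => σ x = x).card

/-- A permutation comes from a noncrossing partition of `{1,…,p}` (by cycling increasingly
inside each block) iff `|π| + |πγ⁻¹| = p + 1` (Biane's characterization). -/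
def IsNCPerm {p : ℕ} (π : Equiv.Perm (Fin p)) : Prop :=
  cycleCount π + cycleCount (π * (finRotate p)⁻¹) = p + 1

open Equiv Equiv.Perm


section Helpers
variable {α : Type*} [Finite α]

/-- natural map between quotients when relations are comparable -/
private def qmap {r s : Setoid α} (h : ∀ a b, r.r a b → s.r a b) :
    Quotient r → Quotient s :=
  fun q => Quotient.liftOn' q (fun a => Quotient.mk'' a) fun a b hab =>
    Quotient.sound' (h _ _ hab)

private lemma qmap_mk {r s : Setoid α} (h : ∀ a b, r.r a b → s.r a b) (a : α) :
    qmap h (Quotient.mk'' a) = Quotient.mk'' a := rfl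

private lemma qmap_surj {r s : Setoid α} (h : ∀ a b, r.r a b → s.r a b) :
    Function.Surjective (qmap h) := by
  intro q
  obtain ⟨a, rfl⟩ := Quotient.exists_rep q
  exact ⟨Quotient.mk'' a, rfl⟩

lemma card_quot_le_of_imp {r s : Setoid α} (h : ∀ a b, r.r a b → s.r a b) :
    Nat.card (Quotient s) ≤ Nat.card (Quotient r) :=
  Nat.card_le_card_of_surjective (qmap h) (qmap_surj h)

lemma card_quot_eq_of_iff {r s : Setoid α} (h : ∀ a b, r.r a b ↔ s.r a b) :
    Nat.card (Quotient r) = Nat.card (Quotient s) :=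
  Nat.card_congr (Quotient.congrRight h)

lemma card_quot_le_add_one {r s : Setoid α} {x y : α}
    (hrs : ∀ a b, r.r a b → s.r a b)
    (hc : ∀ a b, s.r a b → r.r a b ∨ ((r.r a x ∨ r.r a y) ∧ (r.r b x ∨ r.r b y))) :
    Nat.card (Quotient r) ≤ Nat.card (Quotient s) + 1 := by
  classical
  let f : Quotient r → Quotient s ⊕ Unit := fun q =>
    if q = Quotient.mk'' y then Sum.inr () else Sum.inl (qmap hrs q)
  have hf : Function.Injective f := by
    intro q1 q2 hq
    obtain ⟨a, rfl⟩ := Quotient.exists_rep q1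
    obtain ⟨b, rfl⟩ := Quotient.exists_rep q2
    by_cases h1 : (Quotient.mk r a : Quotient r) = Quotient.mk'' y <;>
      by_cases h2 : (Quotient.mk r b : Quotient r) = Quotient.mk'' y <;>
      simp only [f, h1, h2, if_pos, if_neg, reduceIte] at hq
    · rw [h1, h2]
    · exact absurd hq (by simp)
    · exact absurd hq (by simp)
    · -- both mapped by qmap
      have hs : s.r a b := Quotient.eq''.mp (Sum.inl.inj hq)
      rcases hc a b hs with h | ⟨ha, hb⟩
      · exact Quotient.sound' h
      · have ha' : (Quotient.mk r a : Quotient r) = Quotient.mk'' x := by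
          rcases ha with h' | h'
          · exact Quotient.sound' h'
          · exact absurd (Quotient.sound' h') h1
        have hb' : (Quotient.mk r b : Quotient r) = Quotient.mk'' x := by
          rcases hb with h' | h'
          · exact Quotient.sound' h'
          · exact absurd (Quotient.sound' h') h2
        rw [ha', hb']
  calc Nat.card (Quotient r) ≤ Nat.card (Quotient s ⊕ Unit) :=
        Nat.card_le_card_of_injective f hf
    _ = Nat.card (Quotient s) + 1 := by simp [Nat.card_sum]

lemma card_quot_add_one_le {r s : Setoid α} {x y : α}
    (hrs : ∀ a b, r.r a b → s.r a b) (hsxy : s.r x y) (hrxy : ¬ r.r x y) :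
    Nat.card (Quotient s) + 1 ≤ Nat.card (Quotient r) := by
  classical
  have hf := qmap_surj hrs
  set f := qmap hrs with hfdef
  let g := Function.surjInv hf
  have hg : Function.Injective g := Function.injective_surjInv hf
  have hgf : ∀ q, f (g q) = q := Function.rightInverse_surjInv hf
  have hxy : (Quotient.mk'' x : Quotient r) ≠ Quotient.mk'' y := fun h =>
    hrxy (Quotient.eq''.mp h)
  have hfxy : f (Quotient.mk'' x) = f (Quotient.mk'' y) := by
    exact Quotient.sound' hsxy
  -- at least one of mk x, mk y is not in range of g
  have hmiss : ∃ c : Quotient r, (c = Quotient.mk'' x ∨ c = Quotient.mk'' y) ∧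
      ∀ q, g q ≠ c := by
    by_cases hx : ∃ q, g q = (Quotient.mk'' x : Quotient r)
    · refine ⟨Quotient.mk'' y, Or.inr rfl, fun q hq => ?_⟩
      obtain ⟨q', hq'⟩ := hx
      have h1 : q' = f (Quotient.mk'' x) := by rw [← hq', hgf]
      have h2 : q = f (Quotient.mk'' y) := by rw [← hq, hgf]
      have : q' = q := by rw [h1, h2, hfxy]
      rw [this, hq] at hq'
      exact hxy hq'.symm
    · push_neg at hx
      exact ⟨Quotient.mk'' x, Or.inl rfl, hx⟩
  obtain ⟨c, _, hc⟩ := hmiss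
  let h : Quotient s ⊕ Unit → Quotient r := fun z =>
    match z with
    | Sum.inl q => g q
    | Sum.inr _ => c
  have hh : Function.Injective h := by
    intro z1 z2 hz
    match z1, z2 with
    | Sum.inl q1, Sum.inl q2 => exact congrArg Sum.inl (hg hz)
    | Sum.inl q1, Sum.inr _ => exact absurd hz (hc q1)
    | Sum.inr _, Sum.inl q2 => exact absurd hz.symm (hc q2)
    | Sum.inr _, Sum.inr _ => rfl
  calc Nat.card (Quotient s) + 1 = Nat.card (Quotient s ⊕ Unit) := by simp [Nat.card_sum]
    _ ≤ Nat.card (Quotient r) := Nat.card_le_card_of_injective h hh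

end Helpers

section OrbRel
variable {α : Type*} [Fintype α] [DecidableEq α]

/-- the setoid of the `SameCycle` relation -/
def scSetoid (σ : Perm α) : Setoid α :=
  ⟨σ.SameCycle, ⟨SameCycle.refl σ, fun h => h.symm, fun h h' => h.trans h'⟩⟩

/-- number of cycles (orbits, incl. fixed points) of a permutation -/
noncomputable def ccount (σ : Perm α) : ℕ := Nat.card (Quotient (scSetoid σ))

/-- the orbit relation of a subgroup of permutations -/
def relSetoid (H : Subgroup (Perm α)) : Setoid α :=
  ⟨fun a b => ∃ g ∈ H, g a = b,
   ⟨fun a => ⟨1, one_mem H, rfl⟩,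
    fun {a b} ⟨g, hg, hab⟩ => ⟨g⁻¹, inv_mem hg, by rw [← hab]; simp⟩,
    fun {a b c} ⟨g, hg, hab⟩ ⟨g', hg', hbc⟩ =>
      ⟨g' * g, mul_mem hg' hg, by rw [Perm.mul_apply, hab, hbc]⟩⟩⟩

/-- number of orbits of a subgroup of permutations -/
noncomputable def orbCount (H : Subgroup (Perm α)) : ℕ :=
  Nat.card (Quotient (relSetoid H))

lemma relSetoid_zpowers (σ : Perm α) (a b : α) :
    (relSetoid (Subgroup.zpowers σ)).r a b ↔ σ.SameCycle a b := by
  constructor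
  · rintro ⟨g, hg, rfl⟩
    obtain ⟨i, rfl⟩ := Subgroup.mem_zpowers_iff.mp hg
    exact ⟨i, rfl⟩
  · rintro ⟨i, rfl⟩
    exact ⟨σ ^ i, Subgroup.mem_zpowers_iff.mpr ⟨i, rfl⟩, rfl⟩

lemma ccount_eq_orbCount (σ : Perm α) : ccount σ = orbCount (Subgroup.zpowers σ) :=
  card_quot_eq_of_iff (fun a b => (relSetoid_zpowers σ a b).symm)

lemma orbCount_le_of_le {G H : Subgroup (Perm α)} (h : G ≤ H) :
    orbCount H ≤ orbCount G :=
  card_quot_le_of_imp (fun _ _ ⟨g, hg, hab⟩ => ⟨g, h hg, hab⟩)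

lemma rel_of_mem_closure {S : Set (Perm α)} {H : Subgroup (Perm α)}
    (h : ∀ g ∈ S, ∀ a, (relSetoid H).r a (g a)) :
    ∀ g ∈ Subgroup.closure S, ∀ a, (relSetoid H).r a (g a) := by
  intro g hg
  induction hg using Subgroup.closure_induction with
  | mem g hgS => exact h g hgS
  | one => exact fun a => (relSetoid H).iseqv.refl a
  | mul g g' hg hg' pg pg' =>
    intro a
    have h1 := pg' a
    have h2 := pg (g' a)
    exact (relSetoid H).iseqv.trans h1 (by simpa [Perm.mul_apply] using h2)
  | inv g hg pg =>
    intro a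
    have := pg (g⁻¹ a)
    simp only [Perm.coe_inv, Equiv.apply_symm_apply] at this
    exact (relSetoid H).iseqv.symm this

lemma rel_closure_imp {S : Set (Perm α)} {H : Subgroup (Perm α)}
    (h : ∀ g ∈ S, ∀ a, (relSetoid H).r a (g a)) :
    ∀ a b, (relSetoid (Subgroup.closure S)).r a b → (relSetoid H).r a b := by
  rintro a b ⟨g, hg, rfl⟩
  exact rel_of_mem_closure h g hg a

lemma rel_closure_union_swap {G : Subgroup (Perm α)} {x y : α} :
    ∀ g ∈ Subgroup.closure ((G : Set (Perm α)) ∪ {Equiv.swap x y}), ∀ a,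
      (relSetoid G).r a (g a) ∨
      (((relSetoid G).r a x ∨ (relSetoid G).r a y) ∧
       ((relSetoid G).r (g a) x ∨ (relSetoid G).r (g a) y)) := by
  have hR := (relSetoid G).iseqv
  intro g hg
  induction hg using Subgroup.closure_induction with
  | mem g hgS =>
    intro a
    rcases hgS with hgG | hgt
    · exact Or.inl ⟨g, hgG, rfl⟩
    · simp only [Set.mem_singleton_iff] at hgt
      subst hgt
      by_cases hax : a = x
      · subst hax
        rw [Equiv.swap_apply_left]
        exact Or.inr ⟨Or.inl (hR.refl a), Or.inr (hR.refl y)⟩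
      · by_cases hay : a = y
        · subst hay
          rw [Equiv.swap_apply_right]
          exact Or.inr ⟨Or.inr (hR.refl a), Or.inl (hR.refl x)⟩
        · rw [Equiv.swap_apply_of_ne_of_ne hax hay]
          exact Or.inl (hR.refl a)
  | one => exact fun a => Or.inl (hR.refl a)
  | mul g g' hg hg' pg pg' =>
    intro a
    have h1 := pg' a
    have h2 := pg (g' a)
    rw [show (g * g') a = g (g' a) from rfl]
    rcases h1 with h1 | ⟨h1a, h1b⟩
    · rcases h2 with h2 | ⟨h2a, h2b⟩
      · exact Or.inl (hR.trans h1 h2)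
      · refine Or.inr ⟨?_, h2b⟩
        rcases h2a with h' | h'
        · exact Or.inl (hR.trans h1 h')
        · exact Or.inr (hR.trans h1 h')
    · rcases h2 with h2 | ⟨h2a, h2b⟩
      · refine Or.inr ⟨h1a, ?_⟩
        rcases h1b with h' | h'
        · exact Or.inl (hR.trans (hR.symm h2) h')
        · exact Or.inr (hR.trans (hR.symm h2) h')
      · exact Or.inr ⟨h1a, h2b⟩
  | inv g hg pg =>
    intro a
    have := pg (g⁻¹ a)
    rw [Perm.coe_inv, Equiv.apply_symm_apply] at this
    rcases this with h | ⟨ha, hb⟩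
    · exact Or.inl (hR.symm h)
    · exact Or.inr ⟨hb, ha⟩

lemma subgroup_le_closure_union_swap (G : Subgroup (Perm α)) (x y : α) :
    G ≤ Subgroup.closure ((G : Set (Perm α)) ∪ {Equiv.swap x y}) :=
  fun g hg => Subgroup.subset_closure (Set.mem_union_left _ hg)

lemma swap_mem_closure_union_swap (G : Subgroup (Perm α)) (x y : α) :
    Equiv.swap x y ∈ Subgroup.closure ((G : Set (Perm α)) ∪ {Equiv.swap x y}) :=
  Subgroup.subset_closure (Set.mem_union_right _ rfl)

lemma orbCount_le_closure_union_swap_add_one (G : Subgroup (Perm α)) (x y : α) :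
    orbCount G ≤ orbCount (Subgroup.closure ((G : Set (Perm α)) ∪ {Equiv.swap x y})) + 1 := by
  refine card_quot_le_add_one (x := x) (y := y) ?_ ?_
  · exact fun a b ⟨g, hg, hab⟩ => ⟨g, subgroup_le_closure_union_swap G x y hg, hab⟩
  · rintro a b ⟨g, hg, rfl⟩
    exact rel_closure_union_swap g hg a

lemma orbCount_closure_union_swap_eq (G : Subgroup (Perm α)) {x y : α}
    (hxy : (relSetoid G).r x y) :
    orbCount (Subgroup.closure ((G : Set (Perm α)) ∪ {Equiv.swap x y})) = orbCount G := by
  have hR := (relSetoid G).iseqv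
  refine (card_quot_eq_of_iff ?_).symm
  intro a b
  constructor
  · rintro ⟨g, hg, hab⟩
    exact ⟨g, subgroup_le_closure_union_swap G x y hg, hab⟩
  · refine rel_closure_imp ?_ a b
    intro g hgS c
    rcases hgS with hgG | hgt
    · exact ⟨g, hgG, rfl⟩
    · simp only [Set.mem_singleton_iff] at hgt
      subst hgt
      by_cases hcx : c = x
      · subst hcx; rw [Equiv.swap_apply_left]; exact hxy
      · by_cases hcy : c = y
        · subst hcy; rw [Equiv.swap_apply_right]; exact hR.symm hxy
        · rw [Equiv.swap_apply_of_ne_of_ne hcx hcy]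

end OrbRel

section CcountBasic
variable {α : Type*} [Fintype α] [DecidableEq α]

lemma ccount_one : ccount (1 : Perm α) = Fintype.card α := by
  have : ∀ a b : α, (scSetoid (1 : Perm α)).r a b ↔ a = b := fun a b => sameCycle_one
  rw [ccount, ← Nat.card_eq_fintype_card]
  refine Nat.card_congr (Equiv.ofBijective (fun q => Quotient.liftOn' q id
    (fun a b h => (this a b).mp h)) ⟨?_, ?_⟩)
  · intro q1 q2 h
    obtain ⟨a, rfl⟩ := Quotient.exists_rep q1
    obtain ⟨b, rfl⟩ := Quotient.exists_rep q2
    exact Quotient.sound' ((this a b).mpr h)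
  · exact fun a => ⟨Quotient.mk'' a, rfl⟩

lemma ccount_le_card (σ : Perm α) : ccount σ ≤ Fintype.card α := by
  rw [ccount, ← Nat.card_eq_fintype_card]
  exact Nat.card_le_card_of_surjective (Quotient.mk'') (fun q => Quotient.exists_rep q)

lemma ccount_lt_card_of_ne_one {σ : Perm α} (h : σ ≠ 1) :
    ccount σ < Fintype.card α := by
  classical
  obtain ⟨x, hx⟩ : ∃ x, σ x ≠ x := by
    by_contra hc
    push_neg at hc
    exact h (Equiv.ext hc)
  rw [ccount, ← Nat.card_eq_fintype_card, Nat.card_eq_fintype_card,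
    Nat.card_eq_fintype_card]
  refine Fintype.card_lt_of_surjective_not_injective (Quotient.mk'' : α → _)
    (fun q => Quotient.exists_rep q) (fun hinj => ?_)
  have : (Quotient.mk'' (σ x) : Quotient (scSetoid σ)) = Quotient.mk'' x :=
    Quotient.sound' ((scSetoid σ).iseqv.symm ⟨(1 : ℤ), by simp⟩)
  exact hx (hinj this)

lemma ccount_inv (σ : Perm α) : ccount σ⁻¹ = ccount σ :=
  card_quot_eq_of_iff (fun a b => sameCycle_inv)

lemma ccount_conj (g σ : Perm α) : ccount (g * σ * g⁻¹) = ccount σ := by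
  refine (card_quot_eq_of_iff (r := scSetoid (g * σ * g⁻¹)) (fun a b => ?_)).symm.trans
    (Nat.card_congr (Quotient.congr g (fun a b => ?_))).symm
  · exact Iff.rfl
  · show σ.SameCycle a b ↔ (g * σ * g⁻¹).SameCycle (g a) (g b)
    rw [sameCycle_conj]
    simp

end CcountBasic

section A1
variable {p : ℕ} (σ : Equiv.Perm (Fin p))

private def phi (σ : Equiv.Perm (Fin p)) (a : Fin p) :
    ↥σ.cycleFactorsFinset ⊕ {x : Fin p // σ x = x} :=
  if h : σ a = a then Sum.inr ⟨a, h⟩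
  else Sum.inl ⟨σ.cycleOf a, cycleOf_mem_cycleFactorsFinset_iff.mpr (mem_support.mpr h)⟩

private lemma phi_key (a b : Fin p) : (scSetoid σ).r a b ↔ phi σ a = phi σ b := by
  constructor
  · intro h
    by_cases ha : σ a = a
    · have hab : a = b := by
        obtain ⟨i, hi⟩ := h
        rw [← hi, zpow_apply_eq_self_of_apply_eq_self ha]
      subst hab; rfl
    · have hb : ¬ σ b = b := by
        intro hb
        obtain ⟨i, hi⟩ := h.symm
        have hab : a = b := by
          rw [← hi]; exact zpow_apply_eq_self_of_apply_eq_self hb i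
        exact ha (hab ▸ hb)
      simp only [phi, dif_neg ha, dif_neg hb]
      exact congrArg _ (Subtype.ext (SameCycle.cycleOf_eq h))
  · intro h
    by_cases ha : σ a = a <;> by_cases hb : σ b = b <;>
      simp only [phi, dif_pos, dif_neg, ha, hb] at h
    · have hab : a = b := by simpa using h
      exact hab ▸ (scSetoid σ).iseqv.refl a
    · exact absurd h (by simp)
    · exact absurd h (by simp)
    · have hcab : σ.cycleOf a = σ.cycleOf b := by simpa using h
      have hb' : b ∈ (σ.cycleOf b).support :=
        mem_support_cycleOf_iff.mpr ⟨SameCycle.refl σ b, mem_support.mpr hb⟩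
      rw [← hcab] at hb'
      exact (mem_support_cycleOf_iff.mp hb').1

private lemma phi_bij : Function.Bijective
    (fun q => Quotient.liftOn' q (phi σ) (fun a b h => (phi_key σ a b).mp h)) := by
  constructor
  · intro q1 q2 h
    obtain ⟨a, rfl⟩ := Quotient.exists_rep q1
    obtain ⟨b, rfl⟩ := Quotient.exists_rep q2
    exact Quotient.sound' ((phi_key σ a b).mpr h)
  · rintro (⟨c, hc⟩ | ⟨a, ha⟩)
    · obtain ⟨hcyc, hsupp⟩ := mem_cycleFactorsFinset_iff.mp hc
      obtain ⟨x, hx, -⟩ := hcyc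
      have hxc : x ∈ c.support := mem_support.mpr hx
      have hσx : σ x ≠ x := by rw [← hsupp x hxc]; exact hx
      refine ⟨Quotient.mk'' x, ?_⟩
      show phi σ x = _
      rw [phi, dif_neg hσx]
      exact congrArg _ (Subtype.ext (cycle_is_cycleOf hxc hc).symm)
    · exact ⟨Quotient.mk'' a, by show phi σ a = _; rw [phi, dif_pos ha]⟩

lemma cycleCount_eq_ccount : cycleCount σ = ccount σ := by
  classical
  have h1 : ccount σ = σ.cycleFactorsFinset.card +
      (Finset.univ.filter fun x => σ x = x).card := by
    rw [ccount, Nat.card_congr (Equiv.ofBijective _ (phi_bij σ)), Nat.card_sum]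
    congr 1
    · rw [Nat.card_eq_fintype_card, Fintype.card_coe]
    · rw [Nat.card_eq_fintype_card, Fintype.card_subtype]
  rw [cycleCount, h1, cycleType_def]
  congr 1
  rw [Multiset.card_map]
  rfl

end A1

section CutJoin
variable {α : Type*} [Fintype α] [DecidableEq α]

private lemma pow_mod_apply {σ : Perm α} {a : α} {m : ℕ} (hm : (σ ^ m) a = a) (k : ℕ) :
    (σ ^ k) a = (σ ^ (k % m)) a := by
  conv_lhs => rw [← Nat.mod_add_div k m]
  rw [pow_add, Perm.mul_apply, pow_mul]
  rw [pow_apply_eq_self_of_apply_eq_self hm]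

private lemma sc_of_nat_pow {σ : Perm α} {a b : α} {k : ℕ} (h : (σ ^ k) a = b) :
    σ.SameCycle a b := ⟨(k : ℤ), by rw [zpow_natCast]; exact h⟩

private lemma walk (σ : Perm α) (x y : α) :
    ∀ k : ℕ, 1 ≤ k → (∀ j, 1 ≤ j → j < k → (σ ^ j) y ≠ x ∧ (σ ^ j) y ≠ y) →
      ((σ * Equiv.swap x y) ^ k) x = (σ ^ k) y := by
  intro k
  induction k with
  | zero => omega
  | succ n ih =>
    intro _ hcond
    by_cases h1 : n = 0
    · subst h1
      rw [pow_one, pow_one, Perm.mul_apply, Equiv.swap_apply_left]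
    · have hn : 1 ≤ n := by omega
      have ihn := ih hn (fun j hj hjn => hcond j hj (by omega))
      have hny := hcond n hn (by omega)
      rw [pow_succ', Perm.mul_apply, ihn, Perm.mul_apply,
        Equiv.swap_apply_of_ne_of_ne hny.1 hny.2, pow_succ', Perm.mul_apply]

variable {σ : Perm α} {x y : α}

private lemma period_exists (σ : Perm α) (a : α) : ∃ k, 1 ≤ k ∧ (σ ^ k) a = a :=
  ⟨orderOf σ, orderOf_pos σ, by rw [pow_orderOf_eq_one]; rfl⟩

/-- merge: if x,y in different cycles, then x,y are in the same cycle of σ·(x y),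
    and moreover every σ-relation survives. -/
private lemma merge_claims (hxy : x ≠ y) (h : ¬σ.SameCycle x y) :
    (σ * Equiv.swap x y).SameCycle x y ∧
    (∀ a b, σ.SameCycle a b → (σ * Equiv.swap x y).SameCycle a b) := by
  classical
  set τ := Equiv.swap x y with hτ
  set σ' := σ * τ with hσ'
  -- minimal period of y
  have hey := period_exists σ y
  set m := Nat.find hey with hmdef
  obtain ⟨hm1, hmy⟩ := Nat.find_spec hey
  have hmmin : ∀ j, 1 ≤ j → j < m → (σ ^ j) y ≠ y := by
    intro j hj1 hjm hjy
    exact Nat.find_min hey hjm ⟨hj1, hjy⟩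
  have hnx : ∀ j : ℕ, (σ ^ j) y ≠ x := by
    intro j hj
    exact h ((sc_of_nat_pow hj).symm)
  have hcondm : ∀ j, 1 ≤ j → j < m → (σ ^ j) y ≠ x ∧ (σ ^ j) y ≠ y :=
    fun j hj1 hjm => ⟨hnx j, hmmin j hj1 hjm⟩
  have M1 : ∀ k, 1 ≤ k → k ≤ m → (σ' ^ k) x = (σ ^ k) y := by
    intro k hk1 hkm
    exact walk σ x y k hk1 (fun j hj1 hjk => hcondm j hj1 (by omega))
  have M2 : σ'.SameCycle x y := by
    refine sc_of_nat_pow (k := m) ?_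
    rw [M1 m hm1 le_rfl]; exact hmy
  have M3 : ∀ c, σ.SameCycle y c → σ'.SameCycle x c := by
    intro c hc
    obtain ⟨k, -, hk⟩ := hc.exists_pow_eq'
    have hk' : (σ ^ (k % m)) y = c := by rw [← pow_mod_apply hmy k]; exact hk
    rcases Nat.eq_zero_or_pos (k % m) with hr | hr
    · rw [hr, pow_zero] at hk'
      exact hk' ▸ M2
    · refine sc_of_nat_pow (k := k % m) ?_
      rw [M1 _ hr (le_of_lt (Nat.mod_lt k (by omega)))]; exact hk'
  -- now the x-side walk
  have hex := period_exists σ x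
  set m' := Nat.find hex with hm'def
  obtain ⟨hm'1, hm'x⟩ := Nat.find_spec hex
  have hm'min : ∀ j, 1 ≤ j → j < m' → (σ ^ j) x ≠ x := by
    intro j hj1 hjm hjx
    exact Nat.find_min hex hjm ⟨hj1, hjx⟩
  have hny' : ∀ j : ℕ, (σ ^ j) x ≠ y := by
    intro j hj
    exact h (sc_of_nat_pow hj)
  have W2 : ∀ j, 1 ≤ j → j ≤ m' → (σ' ^ (m + j)) x = (σ ^ j) x := by
    intro j
    induction j with
    | zero => omega
    | succ n ih =>
      intro _ hnm
      by_cases h1 : n = 0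
      · subst h1
        rw [pow_succ', Perm.mul_apply, M1 m hm1 le_rfl, hmy, pow_one]
        show σ (τ y) = σ x
        rw [hτ, Equiv.swap_apply_right]
      · have hn : 1 ≤ n := by omega
        have ihn := ih hn (by omega)
        have hx1 : (σ ^ n) x ≠ x := hm'min n hn (by omega)
        have hy1 : (σ ^ n) x ≠ y := hny' n
        rw [show m + (n+1) = (m + n) + 1 by omega, pow_succ', Perm.mul_apply, ihn]
        show σ (τ ((σ ^ n) x)) = (σ ^ (n+1)) x
        rw [hτ, Equiv.swap_apply_of_ne_of_ne hx1 hy1, pow_succ', Perm.mul_apply]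
  have M4 : ∀ c, σ.SameCycle x c → σ'.SameCycle x c := by
    intro c hc
    obtain ⟨k, -, hk⟩ := hc.exists_pow_eq'
    have hk' : (σ ^ (k % m')) x = c := by rw [← pow_mod_apply hm'x k]; exact hk
    rcases Nat.eq_zero_or_pos (k % m') with hr | hr
    · rw [hr, pow_zero] at hk'
      exact hk' ▸ SameCycle.refl σ' x
    · refine sc_of_nat_pow (k := m + (k % m')) ?_
      rw [W2 _ hr (le_of_lt (Nat.mod_lt k (by omega)))]; exact hk'
  refine ⟨M2, ?_⟩
  intro a b hab
  by_cases hxa : σ.SameCycle x a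
  · exact (M4 a hxa).symm.trans (M4 b (hxa.trans hab))
  · by_cases hya : σ.SameCycle y a
    · exact (M3 a hya).symm.trans (M3 b (hya.trans hab))
    · obtain ⟨k, -, hk⟩ := hab.exists_pow_eq'
      have neutral : ∀ j : ℕ, (σ' ^ j) a = (σ ^ j) a := by
        intro j
        induction j with
        | zero => simp
        | succ n ih =>
          have h1 : (σ ^ n) a ≠ x := fun hj => hxa ((sc_of_nat_pow hj).symm)
          have h2 : (σ ^ n) a ≠ y := fun hj => hya ((sc_of_nat_pow hj).symm)
          rw [pow_succ', Perm.mul_apply, ih]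
          show σ (τ ((σ ^ n) a)) = (σ ^ (n+1)) a
          rw [hτ, Equiv.swap_apply_of_ne_of_ne h1 h2, pow_succ', Perm.mul_apply]
      exact sc_of_nat_pow (k := k) (by rw [neutral k]; exact hk)

/-- split: if x,y are in the same cycle of σ, they are in different cycles of σ·(x y). -/
private lemma split_claim (hxy : x ≠ y) (h : σ.SameCycle x y) :
    ¬(σ * Equiv.swap x y).SameCycle x y := by
  classical
  set τ := Equiv.swap x y with hτ
  set σ' := σ * τ with hσ'
  have hyx : ∃ k, 1 ≤ k ∧ (σ ^ k) y = x := by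
    obtain ⟨k, -, hk⟩ := h.symm.exists_pow_eq'
    refine ⟨k, ?_, hk⟩
    rcases Nat.eq_zero_or_pos k with h0 | h0
    · rw [h0, pow_zero] at hk; exact absurd hk.symm hxy
    · exact h0
  set k₀ := Nat.find hyx with hk₀def
  obtain ⟨hk₀1, hk₀x⟩ := Nat.find_spec hyx
  have hk₀min : ∀ j, 1 ≤ j → j < k₀ → (σ ^ j) y ≠ x := by
    intro j hj1 hjk hjx
    exact Nat.find_min hyx hjk ⟨hj1, hjx⟩
  have hny : ∀ j, 1 ≤ j → j < k₀ → (σ ^ j) y ≠ y := by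
    intro j hj1 hjk hjy
    have : (σ ^ (k₀ - j)) y = x := by
      have : (σ ^ (k₀ - j)) ((σ ^ j) y) = x := by
        rw [← Perm.mul_apply, ← pow_add, Nat.sub_add_cancel (by omega)]
        exact hk₀x
      rwa [hjy] at this
    exact hk₀min (k₀ - j) (by omega) (by omega) this
  have W : ∀ k, 1 ≤ k → k ≤ k₀ → (σ' ^ k) x = (σ ^ k) y := by
    intro k hk1 hkk
    exact walk σ x y k hk1
      (fun j hj1 hjk => ⟨hk₀min j hj1 (by omega), hny j hj1 (by omega)⟩)
  have hper : (σ' ^ k₀) x = x := by rw [W k₀ hk₀1 le_rfl]; exact hk₀x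
  intro hc
  obtain ⟨k, -, hk⟩ := hc.exists_pow_eq'
  have hk' : (σ' ^ (k % k₀)) x = y := by rw [← pow_mod_apply hper k]; exact hk
  rcases Nat.eq_zero_or_pos (k % k₀) with hr | hr
  · rw [hr, pow_zero] at hk'; exact hxy hk'
  · have hlt : k % k₀ < k₀ := Nat.mod_lt k (by omega)
    rw [W _ hr (le_of_lt hlt)] at hk'
    exact hny _ hr hlt hk'

lemma ccount_mul_swap_of_not_sameCycle (hxy : x ≠ y) (h : ¬σ.SameCycle x y) :
    ccount (σ * Equiv.swap x y) + 1 = ccount σ := by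
  obtain ⟨M2, M5⟩ := merge_claims hxy h
  have upper : ccount (σ * Equiv.swap x y) + 1 ≤ ccount σ :=
    card_quot_add_one_le (r := scSetoid σ) (s := scSetoid (σ * Equiv.swap x y))
      M5 M2 h
  have lower : ccount σ ≤ ccount (σ * Equiv.swap x y) + 1 := by
    have h1 : ccount σ ≤
        orbCount (Subgroup.closure ((Subgroup.zpowers σ : Set (Perm α)) ∪ {Equiv.swap x y})) + 1 := by
      rw [ccount_eq_orbCount]
      exact orbCount_le_closure_union_swap_add_one _ x y
    have h2 : Subgroup.zpowers (σ * Equiv.swap x y) ≤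
        Subgroup.closure ((Subgroup.zpowers σ : Set (Perm α)) ∪ {Equiv.swap x y}) := by
      rw [Subgroup.zpowers_le]
      exact mul_mem (subgroup_le_closure_union_swap _ x y (Subgroup.mem_zpowers σ))
        (swap_mem_closure_union_swap _ x y)
    have h3 := orbCount_le_of_le h2
    rw [← ccount_eq_orbCount] at h3
    omega
  omega

lemma ccount_mul_swap_of_sameCycle (hxy : x ≠ y) (h : σ.SameCycle x y) :
    ccount (σ * Equiv.swap x y) = ccount σ + 1 := by
  have hns := split_claim hxy h
  have := ccount_mul_swap_of_not_sameCycle (σ := σ * Equiv.swap x y) hxy hns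
  rw [mul_assoc, Equiv.swap_mul_self, mul_one] at this
  omega

lemma ccount_mul_swap_le (hxy : x ≠ y) (σ : Perm α) :
    ccount (σ * Equiv.swap x y) ≤ ccount σ + 1 := by
  by_cases h : σ.SameCycle x y
  · rw [ccount_mul_swap_of_sameCycle hxy h]
  · have := ccount_mul_swap_of_not_sameCycle hxy h
    omega

lemma ccount_le_mul_swap (hxy : x ≠ y) (σ : Perm α) :
    ccount σ ≤ ccount (σ * Equiv.swap x y) + 1 := by
  by_cases h : σ.SameCycle x y
  · have := ccount_mul_swap_of_sameCycle hxy h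
    omega
  · have := ccount_mul_swap_of_not_sameCycle hxy h
    omega

end CutJoin

section Triangle
variable {α : Type*} [Fintype α] [DecidableEq α]

lemma exists_moved {B : Perm α} (h : B ≠ 1) : ∃ x, B x ≠ x := by
  by_contra hc
  push_neg at hc
  exact h (Equiv.ext hc)

lemma triangle_aux (A : Perm α) : ∀ n : ℕ, ∀ B : Perm α, Fintype.card α - ccount B ≤ n →
    ccount A + ccount B ≤ ccount (A * B) + Fintype.card α := by
  intro n
  induction n with
  | zero =>
    intro B hB
    have hle := ccount_le_card B
    have hBe : B = 1 := by
      by_contra hc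
      have := ccount_lt_card_of_ne_one hc
      omega
    subst hBe
    rw [mul_one, ccount_one]
  | succ n ih =>
    intro B hB
    by_cases hBe : B = 1
    · subst hBe; rw [mul_one, ccount_one]
    · obtain ⟨x, hx⟩ := exists_moved hBe
      have hxy : x ≠ B x := fun h => hx h.symm
      have hsc : B.SameCycle x (B x) := ⟨1, by rw [zpow_one]⟩
      have hsplit := ccount_mul_swap_of_sameCycle hxy hsc
      have hlt := ccount_lt_card_of_ne_one hBe
      have hih := ih (B * Equiv.swap x (B x)) (by omega)
      have hmul : A * B = (A * (B * Equiv.swap x (B x))) * Equiv.swap x (B x) := by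
        rw [mul_assoc, mul_assoc, Equiv.swap_mul_self, mul_one]
      have hd := ccount_le_mul_swap hxy (A * (B * Equiv.swap x (B x)))
      rw [← hmul] at hd
      omega

lemma triangle (A B : Perm α) :
    ccount A + ccount B ≤ ccount (A * B) + Fintype.card α :=
  triangle_aux A _ B le_rfl

lemma closure_pair_one (A : Perm α) :
    Subgroup.closure ({A, 1} : Set (Perm α)) = Subgroup.zpowers A := by
  apply le_antisymm
  · rw [Subgroup.closure_le]
    rintro g (rfl | rfl)
    · exact Subgroup.mem_zpowers _
    · exact one_mem _
  · rw [Subgroup.zpowers_le]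
    exact Subgroup.subset_closure (Set.mem_insert A _)

lemma genus_aux (A : Perm α) : ∀ n : ℕ, ∀ B : Perm α, Fintype.card α - ccount B ≤ n →
    ccount A + ccount B + ccount (A * B) ≤
      Fintype.card α + 2 * orbCount (Subgroup.closure ({A, B} : Set (Perm α))) := by
  intro n
  induction n with
  | zero =>
    intro B hB
    have hle := ccount_le_card B
    have hBe : B = 1 := by
      by_contra hc
      have := ccount_lt_card_of_ne_one hc
      omega
    subst hBe
    rw [mul_one, ccount_one, closure_pair_one, ← ccount_eq_orbCount]
    omega
  | succ n ih =>
    intro B hB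
    by_cases hBe : B = 1
    · subst hBe
      rw [mul_one, ccount_one, closure_pair_one, ← ccount_eq_orbCount]
      omega
    · obtain ⟨x, hx⟩ := exists_moved hBe
      set y := B x with hy
      have hxy : x ≠ y := fun h => hx h.symm
      set τ := Equiv.swap x y with hτ
      set B' := B * τ with hB'
      have hsc : B.SameCycle x y := ⟨1, by rw [zpow_one, hy]⟩
      have hsplit : ccount B' = ccount B + 1 := ccount_mul_swap_of_sameCycle hxy hsc
      have hBB' : B = B' * τ := by rw [hB', mul_assoc, hτ, Equiv.swap_mul_self, mul_one]
      have hlt := ccount_lt_card_of_ne_one hBe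
      have hih := ih B' (by omega)
      set G := Subgroup.closure ({A, B} : Set (Perm α)) with hG
      set G' := Subgroup.closure ({A, B'} : Set (Perm α)) with hG'
      set Gt := Subgroup.closure ((G' : Set (Perm α)) ∪ {τ}) with hGt
      have hAG' : A ∈ G' := Subgroup.subset_closure (Set.mem_insert A _)
      have hB'G' : B' ∈ G' := Subgroup.subset_closure (Set.mem_insert_of_mem _ rfl)
      have hGGt : G ≤ Gt := by
        rw [hG, Subgroup.closure_le]
        rintro g (rfl | rfl)
        · exact subgroup_le_closure_union_swap G' x y hAG'
        · rw [hBB']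
          exact mul_mem (subgroup_le_closure_union_swap G' x y hB'G')
            (swap_mem_closure_union_swap G' x y)
      have hGtG := orbCount_le_of_le hGGt
      have hABmul : A * B = (A * B') * τ := by
        have : (A * B') * τ = A * B := by
          rw [mul_assoc, hB', mul_assoc, hτ, Equiv.swap_mul_self, mul_one]
        exact this.symm
      by_cases hrel : (relSetoid G').r x y
      · have heq : orbCount Gt = orbCount G' := orbCount_closure_union_swap_eq G' hrel
        have hd : ccount (A * B) ≤ ccount (A * B') + 1 := by
          rw [hABmul]; exact ccount_mul_swap_le hxy (A * B')
        omega
      · have hnsc : ¬(A * B').SameCycle x y := by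
          intro ⟨i, hi⟩
          exact hrel ⟨(A * B') ^ i, Subgroup.zpow_mem _ (mul_mem hAG' hB'G') i, hi⟩
        have hmerge : ccount ((A * B') * τ) + 1 = ccount (A * B') :=
          ccount_mul_swap_of_not_sameCycle hxy hnsc
        rw [← hABmul] at hmerge
        have hd2 : orbCount G' ≤ orbCount Gt + 1 :=
          orbCount_le_closure_union_swap_add_one G' x y
        omega

lemma genus (A B : Perm α) :
    ccount A + ccount B + ccount (A * B) ≤
      Fintype.card α + 2 * orbCount (Subgroup.closure ({A, B} : Set (Perm α))) :=
  genus_aux A _ B le_rfl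

end Triangle

section CBound
variable {α : Type*} [Fintype α] [DecidableEq α]

lemma sc_zpow_closed {π B : Perm α} (hB : ∀ z, π.SameCycle z (B z)) :
    ∀ (i : ℤ) (z : α), π.SameCycle z ((B ^ i) z) := by
  have hinv : ∀ z, π.SameCycle z (B⁻¹ z) := by
    intro z
    have h := hB (B⁻¹ z)
    rw [Perm.coe_inv, Equiv.apply_symm_apply] at h
    exact h.symm
  intro i
  induction i using Int.induction_on with
  | zero => intro z; rw [zpow_zero]; exact SameCycle.refl π z
  | succ i ih =>
    intro z
    rw [zpow_add_one, Perm.mul_apply]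
    exact (hB z).trans (ih (B z))
  | pred i ih =>
    intro z
    rw [zpow_sub_one, Perm.mul_apply]
    exact (hinv z).trans (ih (B⁻¹ z))

lemma cb_aux (π K : Perm α) : ∀ n : ℕ, ∀ B : Perm α, ccount B ≤ n →
    (∀ z, π.SameCycle z (B z)) →
    orbCount (Subgroup.closure ({B, K} : Set (Perm α))) + ccount π ≤
      ccount (π * K) + ccount B := by
  intro n
  induction n with
  | zero =>
    intro B h0 hB
    rcases isEmpty_or_nonempty α with hα | hα
    · have he : ∀ (r : Setoid α), Nat.card (Quotient r) = 0 := by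
        intro r
        have : IsEmpty (Quotient r) :=
          ⟨fun q => Quotient.inductionOn' q fun a => IsEmpty.false a⟩
        exact Nat.card_of_isEmpty
      show Nat.card _ + Nat.card _ ≤ Nat.card _ + Nat.card _
      rw [he, he, he, he]
    · exfalso
      have hne : Nonempty (Quotient (scSetoid B)) := ⟨Quotient.mk'' (Classical.arbitrary α)⟩
      have : 0 < ccount B := Nat.card_pos
      omega
  | succ n ih =>
    intro B hn hB
    by_cases hex : ∃ x y, π.SameCycle x y ∧ ¬B.SameCycle x y
    · obtain ⟨x, y, hπxy, hBxy⟩ := hex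
      have hxy : x ≠ y := fun h => hBxy (h ▸ SameCycle.refl B x)
      set τ := Equiv.swap x y with hτ
      set B'' := B * τ with hB''def
      have hmerge : ccount B'' + 1 = ccount B :=
        ccount_mul_swap_of_not_sameCycle hxy hBxy
      have hB'' : ∀ z, π.SameCycle z (B'' z) := by
        intro z
        show π.SameCycle z (B (τ z))
        by_cases hzx : z = x
        · subst hzx
          rw [hτ, Equiv.swap_apply_left]
          exact hπxy.trans (hB y)
        · by_cases hzy : z = y
          · subst hzy
            rw [hτ, Equiv.swap_apply_right]
            exact hπxy.symm.trans (hB x)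
          · rw [hτ, Equiv.swap_apply_of_ne_of_ne hzx hzy]
            exact hB z
      set G := Subgroup.closure ({B, K} : Set (Perm α)) with hG
      set Gt := Subgroup.closure ((G : Set (Perm α)) ∪ {τ}) with hGt
      have hBG : B ∈ G := Subgroup.subset_closure (Set.mem_insert B _)
      have hKG : K ∈ G := Subgroup.subset_closure (Set.mem_insert_of_mem _ rfl)
      have h1 : orbCount G ≤ orbCount Gt + 1 :=
        orbCount_le_closure_union_swap_add_one G x y
      have h2 : Subgroup.closure ({B'', K} : Set (Perm α)) ≤ Gt := by
        rw [Subgroup.closure_le]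
        rintro g (rfl | rfl)
        · rw [hB''def]
          exact mul_mem (subgroup_le_closure_union_swap G x y hBG)
            (swap_mem_closure_union_swap G x y)
        · exact subgroup_le_closure_union_swap G x y hKG
      have h3 := orbCount_le_of_le h2
      have hih := ih B'' (by omega) hB''
      omega
    · push_neg at hex
      have hzp := sc_zpow_closed hB
      have hiff : ∀ a b, B.SameCycle a b ↔ π.SameCycle a b := fun a b =>
        ⟨fun ⟨i, hi⟩ => hi ▸ hzp i a, fun h' => hex a b h'⟩
      have hccB : ccount B = ccount π :=
        card_quot_eq_of_iff (r := scSetoid B) (s := scSetoid π) hiff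
      have horb : orbCount (Subgroup.closure ({B, K} : Set (Perm α))) =
          orbCount (Subgroup.closure ({π, K} : Set (Perm α))) := by
        refine card_quot_eq_of_iff (fun a b => ⟨?_, ?_⟩)
        · refine rel_closure_imp ?_ a b
          rintro g (rfl | rfl) c
          · obtain ⟨i, hi⟩ := hB c
            exact ⟨π ^ i, Subgroup.zpow_mem _ (Subgroup.subset_closure (Set.mem_insert _ _)) i, hi⟩
          · exact ⟨g, Subgroup.subset_closure (Set.mem_insert_of_mem _ rfl), rfl⟩
        · refine rel_closure_imp ?_ a b
          rintro g (hgπ | hgK) c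
          · have hπc : π.SameCycle c (g c) := by
              rw [hgπ]; exact ⟨1, by rw [zpow_one]⟩
            obtain ⟨i, hi⟩ := (hiff c (g c)).mpr hπc
            exact ⟨B ^ i, Subgroup.zpow_mem _ (Subgroup.subset_closure (Set.mem_insert _ _)) i, hi⟩
          · rw [Set.mem_singleton_iff] at hgK
            subst hgK
            exact ⟨g, Subgroup.subset_closure (Set.mem_insert_of_mem _ rfl), rfl⟩
      have hmono : orbCount (Subgroup.closure ({π, K} : Set (Perm α))) ≤ ccount (π * K) := by
        rw [ccount_eq_orbCount]
        apply orbCount_le_of_le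
        rw [Subgroup.zpowers_le]
        exact mul_mem (Subgroup.subset_closure (Set.mem_insert _ _))
          (Subgroup.subset_closure (Set.mem_insert_of_mem _ rfl))
      omega

lemma card_quot_eq_one {r : Setoid α} [Nonempty α] (h : ∀ a b : α, r.r a b) :
    Nat.card (Quotient r) = 1 := by
  have hs : Subsingleton (Quotient r) := ⟨fun q1 q2 => by
    obtain ⟨a, rfl⟩ := Quotient.exists_rep q1
    obtain ⟨b, rfl⟩ := Quotient.exists_rep q2
    exact Quotient.sound' (h a b)⟩
  have hne : Nonempty (Quotient r) := ⟨Quotient.mk'' (Classical.arbitrary α)⟩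
  rw [Nat.card_eq_one_iff_unique]
  exact ⟨hs, hne⟩

end CBound

lemma finRotate_sameCycle {p : ℕ} (a b : Fin p) : (finRotate p).SameCycle a b := by
  match p with
  | 0 => exact absurd a.2 (by omega)
  | 1 =>
    have : a = b := Subsingleton.elim a b
    exact this ▸ SameCycle.refl _ a
  | (n + 2) =>
    refine isCycle_finRotate.sameCycle ?_ ?_ <;>
    · rw [← Perm.mem_support, support_finRotate]
      exact Finset.mem_univ _

lemma ccount_finRotate {p : ℕ} (hp : 1 ≤ p) : ccount (finRotate p) = 1 := by
  have : Nonempty (Fin p) := ⟨⟨0, hp⟩⟩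
  exact card_quot_eq_one (fun a b => finRotate_sameCycle a b)

theorem cycleCount_zpow_identity (p : ℕ) (π : Equiv.Perm (Fin p)) (hπ : IsNCPerm π)
    (l : ℤ) :
    p + cycleCount (π ^ l * finRotate p) =
      cycleCount (π * (finRotate p)⁻¹) + cycleCount (π ^ (l + 1)) := by
  rw [IsNCPerm, cycleCount_eq_ccount, cycleCount_eq_ccount] at hπ
  rw [cycleCount_eq_ccount, cycleCount_eq_ccount, cycleCount_eq_ccount]
  rcases Nat.eq_zero_or_pos p with hp | hp
  · subst hp
    have h1 := ccount_le_card π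
    have h2 := ccount_le_card (π * (finRotate 0)⁻¹)
    rw [Fintype.card_fin] at h1 h2
    omega
  · set γ := finRotate p with hγ
    set K := π⁻¹ * γ with hK
    set B := π ^ (l + 1) with hBdef
    have hπK : π * K = γ := by rw [hK, mul_inv_cancel_left]
    have hBK : B * K = π ^ l * γ := by
      rw [hBdef, hK, ← mul_assoc]
      congr 1
      rw [← zpow_sub_one, add_sub_cancel_right]
    have hγ1 : ccount γ = 1 := ccount_finRotate hp
    have hKcc : ccount K = ccount (π * γ⁻¹) := by
      have h1 : ccount (π * γ⁻¹) = ccount (γ * π⁻¹) := by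
        rw [← ccount_inv (π * γ⁻¹), mul_inv_rev, inv_inv]
      have h2 : π⁻¹ * (γ * π⁻¹) * π⁻¹⁻¹ = K := by rw [hK]; group
      rw [h1, ← ccount_conj π⁻¹ (γ * π⁻¹), h2]
    have htri := triangle B K
    have hgen := genus B K
    have hcb := cb_aux π K (ccount B) B le_rfl (fun z => ⟨l + 1, rfl⟩)
    rw [hπK, hγ1] at hcb
    rw [Fintype.card_fin] at htri hgen
    rw [← hBK, ← hKcc]
    omega
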